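/- Let σ ≤ τ in the consecutive pattern poset 𝒫. The interval [σ,τ] contains a non-trivial disconnected subinterval if and only if there exists π with σ ≤ π ≤ τ having two adjacent occurrences in τ whose starting positions differ by at least 3. Moreover, in that case, if the two adjacent occurrences start at positions a < b with b − a ≥ 3, then the subinterval [π, τ[a, b+|π|−1]] is disconnected. -/

import Mathlib

open scoped Classical

noncomputable section

/-- A permutation of length `n`, written in one-line notation as `τ 0, τ 1, …, τ (n-1)`. -/
abbrev Perm' (n : ℕ) := Equiv.Perm (Fin n)

/-- `σ` occurs in `τ` as a consecutive pattern at (0-indexed) starting position `i`: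
the window `τ i, …, τ (i+m-1)` of adjacent entries is in the same relative order as `σ`. -/
def OccursAt {m n : ℕ} (σ : Perm' m) (τ : Perm' n) (i : ℕ) : Prop :=
  ∃ h : i + m ≤ n, ∀ a b : Fin m,
    σ a < σ b ↔
      τ ⟨i + a, by have := a.isLt; omega⟩ < τ ⟨i + b, by have := b.isLt; omega⟩

/-- Consecutive pattern containment `σ ≤ τ`. -/
def PattLE {m n : ℕ} (σ : Perm' m) (τ : Perm' n) : Prop :=
  ∃ i, OccursAt σ τ i

/-- Permutations of arbitrary length: the carrier of the consecutive pattern poset. -/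
abbrev PermS : Type := Σ n : ℕ, Perm' n

/-- The order of the consecutive pattern poset. -/
def pLE (p q : PermS) : Prop := PattLE p.2 q.2

/-- The strict order of the consecutive pattern poset. -/
def pLT (p q : PermS) : Prop := pLE p q ∧ p ≠ q

/-- The covering relation of the consecutive pattern poset. -/
def pCovBy (p q : PermS) : Prop :=
  pLT p q ∧ ∀ r : PermS, pLT p r → pLT r q → False

/-- The open interval `(p,q)` in the consecutive pattern poset. -/
def openInterval (p q : PermS) : Set PermS := {r | pLT p r ∧ pLT r q}

/-- The Hasse diagram of the open interval `(p,q)`: vertices are the permutations strictly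
between `p` and `q`, edges are the covering relations of the consecutive pattern poset. -/
def hasse (p q : PermS) : SimpleGraph (openInterval p q) :=
  SimpleGraph.fromRel fun a b => pCovBy a.1 b.1

/-- The interval `[p,q]` is disconnected if the Hasse diagram of `(p,q)` is not connected. -/
def IntervalDisconnected (p q : PermS) : Prop := ¬ (hasse p q).Connected

/-- `window τ i m` is the reduction of the window of `τ` of length `m` starting at
(0-indexed) position `i`, i.e. the pattern `τ[i+1, i+m]` in 1-indexed notation. -/
def window {n : ℕ} (τ : Perm' n) (i m : ℕ) : Perm' m :=
  if h : i + m ≤ n then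
    (Tuple.sort fun a : Fin m => τ ⟨i + a, by have := a.isLt; omega⟩)⁻¹
  else 1

/-- `τ` is monotone, i.e. equal to `12…n` or `n…21`. -/
def IsMonotone {n : ℕ} (τ : Perm' n) : Prop :=
  (∀ a b : Fin n, a ≤ b → τ a ≤ τ b) ∨ (∀ a b : Fin n, a ≤ b → τ b ≤ τ a)

/-- `τ` has a bifix (a common proper prefix and proper suffix) of length `k`. -/
def HasBifixLen {n : ℕ} (τ : Perm' n) (k : ℕ) : Prop :=
  0 < k ∧ k < n ∧ window τ 0 k = window τ (n - k) k

/-- The length `|x(τ)|` of the exterior of `τ`, the longest bifix of `τ`. -/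
def extLen {n : ℕ} (τ : Perm' n) : ℕ := Nat.findGreatest (HasBifixLen τ) n

/-- The exterior `x(τ)` of `τ`: its longest bifix. -/
def extPerm {n : ℕ} (τ : Perm' n) : Perm' (extLen τ) := window τ 0 (extLen τ)

/-- The interior `i(τ) = τ[2,n-1]` of `τ`. -/
def intPerm {n : ℕ} (τ : Perm' n) : Perm' (n - 2) := window τ 1 (n - 2)

/-- `p` straddles `q`: `p < q`, `p` is both a prefix and a suffix of `q`,
and `p` has no other occurrence in `q`. -/
def Straddles (p q : PermS) : Prop :=
  pLT p q ∧ OccursAt p.2 q.2 0 ∧ OccursAt p.2 q.2 (q.1 - p.1) ∧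
    ∀ i, OccursAt p.2 q.2 i → i = 0 ∨ i = q.1 - p.1

/-- The interval `[p,q]` contains a non-trivial disconnected subinterval, i.e. a
subinterval `[a,b]` of rank at least 3 which is disconnected. -/
def HasNontrivDisconSub (p q : PermS) : Prop :=
  ∃ a b : PermS, pLE p a ∧ pLE a b ∧ pLE b q ∧ a.1 + 3 ≤ b.1 ∧ IntervalDisconnected a b

/-- The finite set of all permutations of length at most `N`. -/
def permsUpTo (N : ℕ) : Finset PermS :=
  (Finset.range (N + 1)).sigma fun n => (Finset.univ : Finset (Perm' n))

/-- The closed interval `[p,q]` of the consecutive pattern poset, as a finite set. -/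
def intervalF (p q : PermS) : Finset PermS :=
  (permsUpTo q.1).filter fun r => pLE p r ∧ pLE r q

/-- The number of elements of the interval `[σ,τ]` of rank `r`, i.e. of length `|σ| + r`. -/
def rankCard {m n : ℕ} (σ : Perm' m) (τ : Perm' n) (r : ℕ) : ℕ :=
  ((permsUpTo n).filter fun p => pLE ⟨m, σ⟩ p ∧ pLE p ⟨n, τ⟩ ∧ p.1 = m + r).card

/-- The direct sum `σ ⊕ π` of two permutations. -/
def dsum {m k : ℕ} (σ : Perm' m) (π : Perm' k) : Perm' (m + k) :=
  finSumFinEquiv.permCongr (σ.sumCongr π)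


section Infra

lemma perm_lt_congr {n : ℕ} (τ : Perm' n) {x y x' y' : ℕ} {hx : x < n} {hy : y < n}
    {hx' : x' < n} {hy' : y' < n} (ex : x = x') (ey : y = y') :
    (τ ⟨x, hx⟩ < τ ⟨y, hy⟩) ↔ (τ ⟨x', hx'⟩ < τ ⟨y', hy'⟩) := by
  subst ex; subst ey; rfl

lemma occursAt_refl {m : ℕ} (σ : Perm' m) : OccursAt σ σ 0 := by
  refine ⟨by omega, fun a b => ?_⟩
  have h1 : (⟨0 + (a : ℕ), by omega⟩ : Fin m) = a := Fin.ext (by simp)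
  have h2 : (⟨0 + (b : ℕ), by omega⟩ : Fin m) = b := Fin.ext (by simp)
  rw [h1, h2]

lemma occursAt_unique {m n : ℕ} {σ σ' : Perm' m} {τ : Perm' n} {i : ℕ}
    (h : OccursAt σ τ i) (h' : OccursAt σ' τ i) : σ = σ' := by
  obtain ⟨hb, hiff⟩ := h; obtain ⟨hb', hiff'⟩ := h'
  have key : ∀ a b, σ a < σ b ↔ σ' a < σ' b := fun a b => (hiff a b).trans (hiff' a b).symm
  have hsm : StrictMono (⇑σ' ∘ ⇑σ.symm) := by
    intro x y hxy
    have : σ (σ.symm x) < σ (σ.symm y) := by simpa using hxy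
    simpa using (key (σ.symm x) (σ.symm y)).mp this
  have hr : Set.range (⇑σ' ∘ ⇑σ.symm) = Set.range (id : Fin m → Fin m) := by
    rw [(σ'.surjective.comp σ.symm.surjective).range_eq, Set.range_id]
  have hfun := (@StrictMono.range_inj (Fin m) (Fin m) _ _ (inferInstance : WellFoundedLT (Fin m)) _ id hsm strictMono_id).mp hr
  ext x
  have := congrFun hfun (σ x)
  simp only [Function.comp_apply, Equiv.symm_apply_apply, id_eq] at this
  exact congrArg Fin.val this.symm

lemma occursAt_trans {k m n : ℕ} {π : Perm' k} {ρ : Perm' m} {τ : Perm' n} {p i : ℕ}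
    (h1 : OccursAt π ρ p) (h2 : OccursAt ρ τ i) : OccursAt π τ (i + p) := by
  obtain ⟨hb1, hf1⟩ := h1; obtain ⟨hb2, hf2⟩ := h2
  refine ⟨by omega, fun a b => ?_⟩
  refine (hf1 a b).trans ?_
  refine (hf2 ⟨p + a, by omega⟩ ⟨p + b, by omega⟩).trans ?_
  exact perm_lt_congr τ (by simp; omega) (by simp; omega)

lemma occursAt_sub {k m n : ℕ} {μ : Perm' k} {ρ : Perm' m} {τ : Perm' n} {i j : ℕ}
    (hρ : OccursAt ρ τ i) (hμ : OccursAt μ τ j) (h1 : i ≤ j) (h2 : j + k ≤ i + m) :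
    OccursAt μ ρ (j - i) := by
  obtain ⟨hbρ, hfρ⟩ := hρ; obtain ⟨hbμ, hfμ⟩ := hμ
  refine ⟨by omega, fun a b => ?_⟩
  refine (hfμ a b).trans ?_
  refine Iff.trans ?_ (hfρ ⟨j - i + a, by omega⟩ ⟨j - i + b, by omega⟩).symm
  exact perm_lt_congr τ (by simp; omega) (by simp; omega)

lemma window_occursAt {n : ℕ} (τ : Perm' n) (i m : ℕ) (h : i + m ≤ n) :
    OccursAt (window τ i m) τ i := by
  refine ⟨h, fun a b => ?_⟩
  rw [window, dif_pos h]
  set f : Fin m → Fin n := fun a => τ ⟨i + a, by have := a.isLt; omega⟩ with hf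
  have hfi : Function.Injective f := by
    intro x y hxy
    have h2 : (⟨i + (x : ℕ), _⟩ : Fin n) = ⟨i + (y : ℕ), _⟩ := τ.injective hxy
    have h3 : i + (x : ℕ) = i + (y : ℕ) := congrArg Fin.val h2
    exact Fin.ext (by omega)
  have hsm : StrictMono (f ∘ ⇑(Tuple.sort f)) :=
    (Tuple.monotone_sort f).strictMono_of_injective (hfi.comp (Equiv.injective _))
  have : (Tuple.sort f)⁻¹ a < (Tuple.sort f)⁻¹ b ↔ f a < f b := by
    rw [← hsm.lt_iff_lt]
    simp [Equiv.Perm.inv_def, Equiv.apply_symm_apply]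
  exact this

lemma occursAt_window_eq {m n : ℕ} {μ : Perm' m} {τ : Perm' n} {i : ℕ}
    (h : OccursAt μ τ i) : μ = window τ i m :=
  occursAt_unique h (window_occursAt τ i m h.1)

lemma pLE_trans {p q r : PermS} (h1 : pLE p q) (h2 : pLE q r) : pLE p r := by
  obtain ⟨i, hi⟩ := h1; obtain ⟨j, hj⟩ := h2
  exact ⟨j + i, occursAt_trans hi hj⟩

lemma pLE_len {p q : PermS} (h : pLE p q) : p.1 ≤ q.1 := by
  obtain ⟨i, hi, _⟩ := h; omega

lemma pLE_refl (p : PermS) : pLE p p := ⟨0, occursAt_refl p.2⟩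

lemma eq_of_pLE_of_len {p q : PermS} (h : pLE p q) (hl : q.1 ≤ p.1) : p = q := by
  obtain ⟨m, π⟩ := p; obtain ⟨n, τ⟩ := q
  obtain ⟨i, hocc⟩ := h
  have hb := hocc.1
  simp only at hb hl ⊢
  have hmn : m = n := by omega
  subst hmn
  have hi0 : i = 0 := by omega
  subst hi0
  exact congrArg (Sigma.mk m) (occursAt_unique hocc (occursAt_refl τ))

lemma pLT_len {p q : PermS} (h : pLT p q) : p.1 < q.1 := by
  rcases lt_or_ge p.1 q.1 with h' | h'
  · exact h'
  · exact absurd (eq_of_pLE_of_len h.1 h') h.2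

lemma pLT_of_pLE_len {p q : PermS} (h : pLE p q) (hl : p.1 < q.1) : pLT p q :=
  ⟨h, fun he => by rw [he] at hl; omega⟩

lemma pCovBy_of_succ {p q : PermS} (h : pLT p q) (hl : q.1 = p.1 + 1) : pCovBy p q := by
  refine ⟨h, fun r h1 h2 => ?_⟩
  have := pLT_len h1; have := pLT_len h2; omega

lemma adj_of_succ {p q : PermS} {x y : openInterval p q} (hlt : pLT x.1 y.1)
    (hlen : y.1.1 = x.1.1 + 1) : (hasse p q).Adj x y := by
  rw [hasse, SimpleGraph.fromRel_adj]
  exact ⟨fun h => hlt.2 (congrArg Subtype.val h), Or.inl (pCovBy_of_succ hlt hlen)⟩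

lemma vertex_eq_window {p : PermS} {N : ℕ} {β : Perm' N} (x : openInterval p ⟨N, β⟩) :
    ∃ i, OccursAt x.1.2 β i ∧ x.1 = (⟨x.1.1, window β i x.1.1⟩ : PermS) := by
  obtain ⟨i, hi⟩ := x.2.2.1
  exact ⟨i, hi, (Sigma.eta x.1).symm.trans
    (congrArg (fun z => (⟨x.1.1, z⟩ : PermS)) (occursAt_window_eq hi))⟩

end Infra

section Discon

lemma straddle_disconnected {k N : ℕ} (π : Perm' k) (ρ : Perm' N) (hk : 1 ≤ k)
    (hN : k + 3 ≤ N) (h0 : OccursAt π ρ 0) (he : OccursAt π ρ (N - k))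
    (hadj : ∀ c, 0 < c → c < N - k → ¬ OccursAt π ρ c) :
    IntervalDisconnected ⟨k, π⟩ ⟨N, ρ⟩ := by
  have hπocc : ∀ c, OccursAt π ρ c → c = 0 ∨ c = N - k := by
    intro c hc
    have hb : c + k ≤ N := hc.1
    by_contra hcon
    push_neg at hcon
    exact hadj c (by omega) (by omega) hc
  have class1 : ∀ u : PermS, pLT ⟨k, π⟩ u → pLT u ⟨N, ρ⟩ →
      ∀ c, OccursAt u.2 ρ c → c = 0 ∨ c = N - u.1 := by
    intro u hl hr c hc
    obtain ⟨q, hq⟩ := hl.1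
    have hqb : q + k ≤ u.1 := hq.1
    have hcb : c + u.1 ≤ N := hc.1
    have htr : OccursAt π ρ (c + q) := occursAt_trans hq hc
    rcases hπocc _ htr with h | h
    · left; omega
    · right; omega
  have hklt : ∀ u : PermS, pLT ⟨k, π⟩ u → pLT u ⟨N, ρ⟩ → k < u.1 ∧ u.1 < N := by
    intro u hl hr
    exact ⟨pLT_len hl, pLT_len hr⟩
  have notboth : ∀ u : PermS, pLT ⟨k, π⟩ u → pLT u ⟨N, ρ⟩ →
      OccursAt u.2 ρ 0 → OccursAt u.2 ρ (N - u.1) → False := by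
    intro u hl hr hu0 hue
    obtain ⟨hk1, hk2⟩ := hklt u hl hr
    obtain ⟨q, hq⟩ := hl.1
    have hqb : q + k ≤ u.1 := hq.1
    have t1 : OccursAt π ρ (0 + q) := occursAt_trans hq hu0
    have t2 : OccursAt π ρ ((N - u.1) + q) := occursAt_trans hq hue
    rcases hπocc _ t1 with h1 | h1
    · rcases hπocc _ t2 with h2 | h2 <;> omega
    · omega
  have step : ∀ x z : openInterval ⟨k, π⟩ ⟨N, ρ⟩,
      (hasse ⟨k, π⟩ ⟨N, ρ⟩).Adj x z → OccursAt x.1.2 ρ 0 → OccursAt z.1.2 ρ 0 := by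
    intro x z hadjxz hx
    rw [hasse, SimpleGraph.fromRel_adj] at hadjxz
    obtain ⟨hxz, hcov⟩ := hadjxz
    by_contra hz
    obtain ⟨hxl, hxr⟩ := x.2
    obtain ⟨hzl, hzr⟩ := z.2
    obtain ⟨i, hi⟩ := hzr.1
    have hzsuf : OccursAt z.1.2 ρ (N - z.1.1) := by
      rcases class1 z.1 hzl hzr i hi with h | h
      · exact absurd (h ▸ hi) hz
      · exact h ▸ hi
    obtain ⟨hkz1, hkz2⟩ := hklt z.1 hzl hzr
    obtain ⟨hkx1, hkx2⟩ := hklt x.1 hxl hxr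
    rcases hcov with hc | hc
    · obtain ⟨p, hp⟩ := hc.1.1
      have hpb : p + x.1.1 ≤ z.1.1 := hp.1
      have htr : OccursAt x.1.2 ρ ((N - z.1.1) + p) := occursAt_trans hp hzsuf
      rcases class1 x.1 hxl hxr _ htr with h | h
      · omega
      · exact notboth x.1 hxl hxr hx (h ▸ htr)
    · obtain ⟨p, hp⟩ := hc.1.1
      have hpb : p + z.1.1 ≤ x.1.1 := hp.1
      have h2 : OccursAt z.1.2 ρ (0 + p) := occursAt_trans hp hx
      rcases class1 z.1 hzl hzr _ h2 with h | h
      · have hp0 : (0 : ℕ) + p = 0 := h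
        rw [hp0] at h2
        exact hz h2
      · omega
  -- the two witnesses
  have hw1b : 0 + (k + 1) ≤ N := by omega
  have hw2b : (N - (k + 1)) + (k + 1) ≤ N := by omega
  have hu₀l : pLT (⟨k, π⟩ : PermS) ⟨k + 1, window ρ 0 (k + 1)⟩ := by
    refine pLT_of_pLE_len ⟨0, ?_⟩ (by show k < k + 1; omega)
    have := occursAt_sub (window_occursAt ρ 0 (k + 1) hw1b) h0 (le_refl 0) (by omega)
    simpa using this
  have hu₀r : pLT (⟨k + 1, window ρ 0 (k + 1)⟩ : PermS) ⟨N, ρ⟩ :=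
    pLT_of_pLE_len ⟨0, window_occursAt ρ 0 (k + 1) hw1b⟩ (by show k + 1 < N; omega)
  have hv₀l : pLT (⟨k, π⟩ : PermS) ⟨k + 1, window ρ (N - (k + 1)) (k + 1)⟩ := by
    refine pLT_of_pLE_len ⟨(N - k) - (N - (k + 1)), ?_⟩ (by show k < k + 1; omega)
    have := occursAt_sub (window_occursAt ρ (N - (k + 1)) (k + 1) hw2b) he (by omega) (by omega)
    exact this
  have hv₀r : pLT (⟨k + 1, window ρ (N - (k + 1)) (k + 1)⟩ : PermS) ⟨N, ρ⟩ :=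
    pLT_of_pLE_len ⟨N - (k + 1), window_occursAt ρ (N - (k + 1)) (k + 1) hw2b⟩ (by show k + 1 < N; omega)
  have hu₀A : OccursAt (window ρ 0 (k + 1)) ρ 0 := window_occursAt ρ 0 (k + 1) hw1b
  have hv₀A : ¬ OccursAt (window ρ (N - (k + 1)) (k + 1)) ρ 0 := by
    intro hAv
    refine notboth ⟨k + 1, window ρ (N - (k + 1)) (k + 1)⟩ hv₀l hv₀r hAv ?_
    have h1 : N - (⟨k + 1, window ρ (N - (k + 1)) (k + 1)⟩ : PermS).1 = N - (k + 1) := rfl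
    rw [h1]
    exact window_occursAt ρ (N - (k + 1)) (k + 1) hw2b
  intro hconn
  have hreach := hconn.preconnected ⟨⟨k + 1, window ρ 0 (k + 1)⟩, hu₀l, hu₀r⟩
    ⟨⟨k + 1, window ρ (N - (k + 1)) (k + 1)⟩, hv₀l, hv₀r⟩
  obtain ⟨w⟩ := hreach
  have key : ∀ (x y : openInterval ⟨k, π⟩ ⟨N, ρ⟩), (hasse ⟨k, π⟩ ⟨N, ρ⟩).Walk x y →
      OccursAt x.1.2 ρ 0 → OccursAt y.1.2 ρ 0 := by
    intro x y w
    induction w with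
    | nil => exact id
    | cons h p ih => intro hx; exact ih (step _ _ h hx)
  exact hv₀A (key _ _ w hu₀A)

end Discon

section Reach

lemma reach_left {k N : ℕ} {α : Perm' k} {β : Perm' N} :
    ∀ d i m, i + m + 1 ≤ N → m + d + 1 = N →
      ∀ (x y : openInterval (⟨k, α⟩ : PermS) ⟨N, β⟩),
        x.1 = (⟨m, window β i m⟩ : PermS) → y.1 = (⟨N - 1, window β 0 (N - 1)⟩ : PermS) →
        (hasse ⟨k, α⟩ ⟨N, β⟩).Reachable x y := by
  intro d
  induction d with
  | zero =>
    intro i m h1 h2 x y hx hy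
    have hm : m = N - 1 := by omega
    have hi : i = 0 := by omega
    subst hm; subst hi
    have hxy : x = y := Subtype.ext (hx.trans hy.symm)
    rw [hxy]
  | succ d ih =>
    intro i m h1 h2 x y hx hy
    -- choose the extension direction
    have hxlt : pLT (⟨k, α⟩ : PermS) x.1 := x.2.1
    have hklen : k < m := by have := pLT_len hxlt; rw [hx] at this; exact this
    set i' : ℕ := if i + m + 2 ≤ N then i else i - 1 with hi'
    have hb1 : i' + (m + 1) + 1 ≤ N := by
      rw [hi']; split <;> omega
    have hb2 : i' ≤ i ∧ i ≤ i' + 1 ∧ i' + 1 ≤ i + 1 := by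
      rw [hi']; split <;> omega
    have hwb : i + m ≤ N := by omega
    have hwb' : i' + (m + 1) ≤ N := by omega
    -- the extended window
    have hocc : OccursAt (window β i m) (window β i' (m + 1)) (i - i') :=
      occursAt_sub (window_occursAt β i' (m + 1) hwb') (window_occursAt β i m hwb)
        (by omega) (by omega)
    have hltw : pLT (⟨m, window β i m⟩ : PermS) ⟨m + 1, window β i' (m + 1)⟩ :=
      pLT_of_pLE_len ⟨i - i', hocc⟩ (by show m < m + 1; omega)
    have hmemL : pLT (⟨k, α⟩ : PermS) ⟨m + 1, window β i' (m + 1)⟩ := by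
      refine pLT_of_pLE_len (pLE_trans (hx ▸ hxlt.1) hltw.1) (by show k < m + 1; omega)
    have hmemR : pLT (⟨m + 1, window β i' (m + 1)⟩ : PermS) ⟨N, β⟩ :=
      pLT_of_pLE_len ⟨i', window_occursAt β i' (m + 1) hwb'⟩ (by show m + 1 < N; omega)
    have hadjx : (hasse (⟨k, α⟩ : PermS) ⟨N, β⟩).Adj x ⟨⟨m + 1, window β i' (m + 1)⟩, hmemL, hmemR⟩ := by
      refine adj_of_succ ?_ ?_
      · rw [hx]; exact hltw
      · rw [hx]
    exact (hadjx.reachable).trans (ih i' (m + 1) hb1 (by omega) _ y rfl hy)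

lemma reach_right {k N : ℕ} {α : Perm' k} {β : Perm' N} :
    ∀ d i m, 1 ≤ i → i + m ≤ N → m + d + 1 = N →
      ∀ (x y : openInterval (⟨k, α⟩ : PermS) ⟨N, β⟩),
        x.1 = (⟨m, window β i m⟩ : PermS) → y.1 = (⟨N - 1, window β 1 (N - 1)⟩ : PermS) →
        (hasse ⟨k, α⟩ ⟨N, β⟩).Reachable x y := by
  intro d
  induction d with
  | zero =>
    intro i m hi1 h1 h2 x y hx hy
    have hm : m = N - 1 := by omega
    have hi : i = 1 := by omega
    subst hm; subst hi
    have hxy : x = y := Subtype.ext (hx.trans hy.symm)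
    rw [hxy]
  | succ d ih =>
    intro i m hi1 h1 h2 x y hx hy
    have hxlt : pLT (⟨k, α⟩ : PermS) x.1 := x.2.1
    have hklen : k < m := by have := pLT_len hxlt; rw [hx] at this; exact this
    set i' : ℕ := if 2 ≤ i then i - 1 else i with hi'
    have hb0 : 1 ≤ i' := by rw [hi']; split <;> omega
    have hb1 : i' + (m + 1) ≤ N := by rw [hi']; split <;> omega
    have hb2 : i' ≤ i ∧ i ≤ i' + 1 := by rw [hi']; split <;> omega
    have hwb : i + m ≤ N := by omega
    have hocc : OccursAt (window β i m) (window β i' (m + 1)) (i - i') :=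
      occursAt_sub (window_occursAt β i' (m + 1) hb1) (window_occursAt β i m hwb)
        (by omega) (by omega)
    have hltw : pLT (⟨m, window β i m⟩ : PermS) ⟨m + 1, window β i' (m + 1)⟩ :=
      pLT_of_pLE_len ⟨i - i', hocc⟩ (by show m < m + 1; omega)
    have hmemL : pLT (⟨k, α⟩ : PermS) ⟨m + 1, window β i' (m + 1)⟩ := by
      refine pLT_of_pLE_len (pLE_trans (hx ▸ hxlt.1) hltw.1) (by show k < m + 1; omega)
    have hmemR : pLT (⟨m + 1, window β i' (m + 1)⟩ : PermS) ⟨N, β⟩ :=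
      pLT_of_pLE_len ⟨i', window_occursAt β i' (m + 1) hb1⟩ (by show m + 1 < N; omega)
    have hadjx : (hasse (⟨k, α⟩ : PermS) ⟨N, β⟩).Adj x ⟨⟨m + 1, window β i' (m + 1)⟩, hmemL, hmemR⟩ := by
      refine adj_of_succ ?_ ?_
      · rw [hx]; exact hltw
      · rw [hx]
    exact (hadjx.reachable).trans (ih i' (m + 1) hb0 hb1 (by omega) _ y rfl hy)

end Reach

section Conn

lemma connected_middle {k N : ℕ} (α : Perm' k) (β : Perm' N) (h3 : k + 3 ≤ N)
    (p : ℕ) (hp : OccursAt α β p) (hp0 : 0 < p) (hpe : p + k + 1 ≤ N) :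
    (hasse (⟨k, α⟩ : PermS) ⟨N, β⟩).Connected := by
  have hpk : p + k ≤ N := hp.1
  have hb1 : 0 + (N - 1) ≤ N := by omega
  have hb2 : 1 + (N - 1) ≤ N := by omega
  have hbν : 1 + (N - 2) ≤ N := by omega
  -- the coatoms and the interior element
  have hβ1l : pLT (⟨k, α⟩ : PermS) ⟨N - 1, window β 0 (N - 1)⟩ := by
    refine pLT_of_pLE_len ⟨p - 0, ?_⟩ (by show k < N - 1; omega)
    have hsub := occursAt_sub (window_occursAt β 0 (N - 1) hb1) hp (by omega) (by omega)
    exact hsub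
  have hβ1r : pLT (⟨N - 1, window β 0 (N - 1)⟩ : PermS) ⟨N, β⟩ :=
    pLT_of_pLE_len ⟨0, window_occursAt β 0 (N - 1) hb1⟩ (by show N - 1 < N; omega)
  have hβ2l : pLT (⟨k, α⟩ : PermS) ⟨N - 1, window β 1 (N - 1)⟩ := by
    refine pLT_of_pLE_len ⟨p - 1, ?_⟩ (by show k < N - 1; omega)
    have hsub := occursAt_sub (window_occursAt β 1 (N - 1) hb2) hp (by omega) (by omega)
    exact hsub
  have hβ2r : pLT (⟨N - 1, window β 1 (N - 1)⟩ : PermS) ⟨N, β⟩ :=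
    pLT_of_pLE_len ⟨1, window_occursAt β 1 (N - 1) hb2⟩ (by show N - 1 < N; omega)
  have hνl : pLT (⟨k, α⟩ : PermS) ⟨N - 2, window β 1 (N - 2)⟩ := by
    refine pLT_of_pLE_len ⟨p - 1, ?_⟩ (by show k < N - 2; omega)
    have hsub := occursAt_sub (window_occursAt β 1 (N - 2) hbν) hp (by omega) (by omega)
    exact hsub
  have hνr : pLT (⟨N - 2, window β 1 (N - 2)⟩ : PermS) ⟨N, β⟩ :=
    pLT_of_pLE_len ⟨1, window_occursAt β 1 (N - 2) hbν⟩ (by show N - 2 < N; omega)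
  set v1 : openInterval (⟨k, α⟩ : PermS) ⟨N, β⟩ :=
    ⟨⟨N - 1, window β 0 (N - 1)⟩, hβ1l, hβ1r⟩ with hv1
  set v2 : openInterval (⟨k, α⟩ : PermS) ⟨N, β⟩ :=
    ⟨⟨N - 1, window β 1 (N - 1)⟩, hβ2l, hβ2r⟩ with hv2
  set vν : openInterval (⟨k, α⟩ : PermS) ⟨N, β⟩ :=
    ⟨⟨N - 2, window β 1 (N - 2)⟩, hνl, hνr⟩ with hvν
  -- edges from the interior element to the two coatoms
  have hadj1 : (hasse (⟨k, α⟩ : PermS) ⟨N, β⟩).Adj vν v1 := by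
    refine adj_of_succ (pLT_of_pLE_len ⟨1 - 0, ?_⟩ (by show N - 2 < N - 1; omega))
      (by show N - 1 = N - 2 + 1; omega)
    have hsub := occursAt_sub (window_occursAt β 0 (N - 1) hb1) (window_occursAt β 1 (N - 2) hbν)
      (by omega) (by omega)
    exact hsub
  have hadj2 : (hasse (⟨k, α⟩ : PermS) ⟨N, β⟩).Adj vν v2 := by
    refine adj_of_succ (pLT_of_pLE_len ⟨1 - 1, ?_⟩ (by show N - 2 < N - 1; omega))
      (by show N - 1 = N - 2 + 1; omega)
    have hsub := occursAt_sub (window_occursAt β 1 (N - 1) hb2) (window_occursAt β 1 (N - 2) hbν)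
      (by omega) (by omega)
    exact hsub
  -- every vertex reaches v1
  have hreach : ∀ x : openInterval (⟨k, α⟩ : PermS) ⟨N, β⟩,
      (hasse (⟨k, α⟩ : PermS) ⟨N, β⟩).Reachable x v1 := by
    intro x
    obtain ⟨i, hocc, hval⟩ := vertex_eq_window x
    have hlow : k < x.1.1 := pLT_len x.2.1
    have hhigh : x.1.1 < N := pLT_len x.2.2
    have hib : i + x.1.1 ≤ N := hocc.1
    by_cases hcase : i + x.1.1 + 1 ≤ N
    · exact reach_left (N - (x.1.1 + 1)) i x.1.1 hcase (by omega) x v1 hval rfl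
    · have h1 : 1 ≤ i := by omega
      have hr2 : (hasse (⟨k, α⟩ : PermS) ⟨N, β⟩).Reachable x v2 :=
        reach_right (N - (x.1.1 + 1)) i x.1.1 h1 hib (by omega) x v2 hval rfl
      exact hr2.trans ((hadj2.symm.reachable).trans hadj1.reachable)
  rw [SimpleGraph.connected_iff]
  exact ⟨fun x y => (hreach x).trans (hreach y).symm, ⟨v1⟩⟩

lemma connected_prefix {k N : ℕ} (α : Perm' k) (β : Perm' N) (h3 : k + 3 ≤ N)
    (h0 : OccursAt α β 0) (honly : ∀ c, OccursAt α β c → c = 0) :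
    (hasse (⟨k, α⟩ : PermS) ⟨N, β⟩).Connected := by
  have hb1 : 0 + (N - 1) ≤ N := by omega
  have hβ1l : pLT (⟨k, α⟩ : PermS) ⟨N - 1, window β 0 (N - 1)⟩ := by
    refine pLT_of_pLE_len ⟨0 - 0, ?_⟩ (by show k < N - 1; omega)
    have hsub := occursAt_sub (window_occursAt β 0 (N - 1) hb1) h0 (by omega) (by omega)
    exact hsub
  have hβ1r : pLT (⟨N - 1, window β 0 (N - 1)⟩ : PermS) ⟨N, β⟩ :=
    pLT_of_pLE_len ⟨0, window_occursAt β 0 (N - 1) hb1⟩ (by show N - 1 < N; omega)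
  set v1 : openInterval (⟨k, α⟩ : PermS) ⟨N, β⟩ :=
    ⟨⟨N - 1, window β 0 (N - 1)⟩, hβ1l, hβ1r⟩ with hv1
  have hreach : ∀ x : openInterval (⟨k, α⟩ : PermS) ⟨N, β⟩,
      (hasse (⟨k, α⟩ : PermS) ⟨N, β⟩).Reachable x v1 := by
    intro x
    obtain ⟨i, hocc, hval⟩ := vertex_eq_window x
    have hlow : k < x.1.1 := pLT_len x.2.1
    have hhigh : x.1.1 < N := pLT_len x.2.2
    have hib : i + x.1.1 ≤ N := hocc.1
    obtain ⟨q, hq⟩ := x.2.1.1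
    have hq2 : q + k ≤ x.1.1 := hq.1
    have htr : OccursAt α β (i + q) := occursAt_trans hq hocc
    have hi0 : i = 0 := by have := honly _ htr; omega
    subst hi0
    exact reach_left (N - (x.1.1 + 1)) 0 x.1.1 (by omega) (by omega) x v1 hval rfl
  rw [SimpleGraph.connected_iff]
  exact ⟨fun x y => (hreach x).trans (hreach y).symm, ⟨v1⟩⟩

lemma connected_suffix {k N : ℕ} (α : Perm' k) (β : Perm' N) (h3 : k + 3 ≤ N)
    (he : OccursAt α β (N - k)) (honly : ∀ c, OccursAt α β c → c = N - k) :
    (hasse (⟨k, α⟩ : PermS) ⟨N, β⟩).Connected := by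
  have hb2 : 1 + (N - 1) ≤ N := by omega
  have hβ2l : pLT (⟨k, α⟩ : PermS) ⟨N - 1, window β 1 (N - 1)⟩ := by
    refine pLT_of_pLE_len ⟨(N - k) - 1, ?_⟩ (by show k < N - 1; omega)
    have hsub := occursAt_sub (window_occursAt β 1 (N - 1) hb2) he (by omega) (by omega)
    exact hsub
  have hβ2r : pLT (⟨N - 1, window β 1 (N - 1)⟩ : PermS) ⟨N, β⟩ :=
    pLT_of_pLE_len ⟨1, window_occursAt β 1 (N - 1) hb2⟩ (by show N - 1 < N; omega)
  set v2 : openInterval (⟨k, α⟩ : PermS) ⟨N, β⟩ :=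
    ⟨⟨N - 1, window β 1 (N - 1)⟩, hβ2l, hβ2r⟩ with hv2
  have hreach : ∀ x : openInterval (⟨k, α⟩ : PermS) ⟨N, β⟩,
      (hasse (⟨k, α⟩ : PermS) ⟨N, β⟩).Reachable x v2 := by
    intro x
    obtain ⟨i, hocc, hval⟩ := vertex_eq_window x
    have hlow : k < x.1.1 := pLT_len x.2.1
    have hhigh : x.1.1 < N := pLT_len x.2.2
    have hib : i + x.1.1 ≤ N := hocc.1
    obtain ⟨q, hq⟩ := x.2.1.1
    have hq2 : q + k ≤ x.1.1 := hq.1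
    have htr : OccursAt α β (i + q) := occursAt_trans hq hocc
    have hiq : i + q = N - k := honly _ htr
    have h1 : 1 ≤ i := by omega
    exact reach_right (N - (x.1.1 + 1)) i x.1.1 h1 hib (by omega) x v2 hval rfl
  rw [SimpleGraph.connected_iff]
  exact ⟨fun x y => (hreach x).trans (hreach y).symm, ⟨v2⟩⟩

end Conn

section Main

lemma discon_straddle {k N : ℕ} {α : Perm' k} {β : Perm' N} (h3 : k + 3 ≤ N)
    (hle : pLE ⟨k, α⟩ ⟨N, β⟩) (hd : IntervalDisconnected ⟨k, α⟩ ⟨N, β⟩) :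
    OccursAt α β 0 ∧ OccursAt α β (N - k) ∧ ∀ c, OccursAt α β c → c = 0 ∨ c = N - k := by
  obtain ⟨c₀, hc₀⟩ := hle
  by_cases hmid : ∃ p, OccursAt α β p ∧ 0 < p ∧ p + k + 1 ≤ N
  · obtain ⟨p, hp, hp0, hpe⟩ := hmid
    exact absurd (connected_middle α β h3 p hp hp0 hpe) hd
  · push_neg at hmid
    have hcl : ∀ c, OccursAt α β c → c = 0 ∨ c = N - k := by
      intro c hc
      have hb : c + k ≤ N := hc.1
      have := hmid c hc
      omega
    by_cases h0 : OccursAt α β 0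
    · by_cases he : OccursAt α β (N - k)
      · exact ⟨h0, he, hcl⟩
      · have honly : ∀ c, OccursAt α β c → c = 0 := by
          intro c hc
          rcases hcl c hc with h | h
          · exact h
          · exact absurd (h ▸ hc) he
        exact absurd (connected_prefix α β h3 h0 honly) hd
    · have honly : ∀ c, OccursAt α β c → c = N - k := by
        intro c hc
        rcases hcl c hc with h | h
        · exact absurd (h ▸ hc) h0
        · exact h
      have he : OccursAt α β (N - k) := by
        have := honly c₀ hc₀
        exact this ▸ hc₀
      exact absurd (connected_suffix α β h3 he honly) hd

end Main


/-- Corollary 3.3: `[σ,τ]` contains a non-trivial disconnected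
subinterval iff some `π ∈ [σ,τ]` has two adjacent occurrences in `τ` offset by at least 3
positions; moreover, for two such adjacent occurrences starting at positions `a < b`, the
subinterval `[π, τ[a, b + |π| - 1]]` (0-indexed window of length `b - a + |π|` starting at
`a`) is disconnected. -/
theorem stmt4 {m n : ℕ} (hm : 1 ≤ m) (σ : Perm' m) (τ : Perm' n) (hle : PattLE σ τ) :
    (HasNontrivDisconSub ⟨m, σ⟩ ⟨n, τ⟩ ↔
      ∃ (k : ℕ) (π : Perm' k) (a b : ℕ), pLE ⟨m, σ⟩ ⟨k, π⟩ ∧ pLE ⟨k, π⟩ ⟨n, τ⟩ ∧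
        OccursAt π τ a ∧ OccursAt π τ b ∧ a + 3 ≤ b ∧
        ∀ c, a < c → c < b → ¬ OccursAt π τ c) ∧
    (∀ (k : ℕ) (π : Perm' k) (a b : ℕ), pLE ⟨m, σ⟩ ⟨k, π⟩ → pLE ⟨k, π⟩ ⟨n, τ⟩ →
        OccursAt π τ a → OccursAt π τ b → a + 3 ≤ b →
        (∀ c, a < c → c < b → ¬ OccursAt π τ c) →
        IntervalDisconnected ⟨k, π⟩ ⟨b - a + k, window τ a (b - a + k)⟩) := by
  -- Part 2 first
  have part2 : ∀ (k : ℕ) (π : Perm' k) (a b : ℕ), pLE ⟨m, σ⟩ ⟨k, π⟩ → pLE ⟨k, π⟩ ⟨n, τ⟩ →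
      OccursAt π τ a → OccursAt π τ b → a + 3 ≤ b →
      (∀ c, a < c → c < b → ¬ OccursAt π τ c) →
      IntervalDisconnected ⟨k, π⟩ ⟨b - a + k, window τ a (b - a + k)⟩ := by
    intro k π a b hσπ hπτ ha hb hab hadj
    have hbb : b + k ≤ n := hb.1
    have hkm : m ≤ k := pLE_len hσπ
    have hwb : a + (b - a + k) ≤ n := by omega
    have hρτ : OccursAt (window τ a (b - a + k)) τ a := window_occursAt τ a (b - a + k) hwb
    have h0 : OccursAt π (window τ a (b - a + k)) 0 := by
      have := occursAt_sub hρτ ha (le_refl a) (by omega)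
      have ha0 : a - a = 0 := by omega
      rw [ha0] at this
      exact this
    have he' : OccursAt π (window τ a (b - a + k)) (b - a) := by
      have := occursAt_sub hρτ hb (by omega) (by omega)
      exact this
    have hee : b - a + k - k = b - a := by omega
    have hadj' : ∀ c, 0 < c → c < (b - a + k) - k → ¬ OccursAt π (window τ a (b - a + k)) c := by
      intro c hc1 hc2 hcc
      have htr : OccursAt π τ (a + c) := occursAt_trans hcc hρτ
      exact hadj (a + c) (by omega) (by omega) htr
    have he2 : OccursAt π (window τ a (b - a + k)) (b - a + k - k) := by
      rw [hee]; exact he'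
    have := straddle_disconnected π (window τ a (b - a + k)) (by omega) (by omega)
      h0 he2 hadj'
    exact this
  refine ⟨⟨?_, ?_⟩, part2⟩
  · -- forward direction
    rintro ⟨A, B, hσA, hAB, hBτ, hrank, hdis⟩
    obtain ⟨kA, α⟩ := A
    obtain ⟨kB, β⟩ := B
    have hrank' : kA + 3 ≤ kB := hrank
    obtain ⟨h0, he, hcl⟩ := discon_straddle hrank' hAB hdis
    obtain ⟨t, ht⟩ := hBτ
    have htb : t + kB ≤ n := ht.1
    refine ⟨kA, α, t, t + (kB - kA), hσA, pLE_trans hAB ⟨t, ht⟩, ?_, ?_, by omega, ?_⟩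
    · have := occursAt_trans h0 ht
      have h' : t + 0 = t := by omega
      rw [h'] at this
      exact this
    · exact occursAt_trans he ht
    · intro c hc1 hc2 hcc
      have hccb : c + kA ≤ n := hcc.1
      have hsub : OccursAt α β (c - t) := occursAt_sub ht hcc (by omega) (by omega)
      rcases hcl _ hsub with h | h <;> omega
  · -- backward direction
    rintro ⟨k, π, a, b, hσπ, hπτ, ha, hb, hab, hadj⟩
    have hbb : b + k ≤ n := hb.1
    have hkm : m ≤ k := pLE_len hσπ
    have hwb : a + (b - a + k) ≤ n := by omega
    refine ⟨⟨k, π⟩, ⟨b - a + k, window τ a (b - a + k)⟩, hσπ, ?_, ?_, (by show k + 3 ≤ b - a + k; omega), 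
      part2 k π a b hσπ hπτ ha hb hab hadj⟩
    · refine ⟨0, ?_⟩
      have := occursAt_sub (window_occursAt τ a (b - a + k) hwb) ha (le_refl a) (by omega)
      have ha0 : a - a = 0 := by omega
      rw [ha0] at this
      exact this
    · exact ⟨a, window_occursAt τ a (b - a + k) hwb⟩

end
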